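/- Let G be a graph, s, t ∈ V(G) two distinct vertices, and k, l non-negative integers. Then (k,l) is a connectivity pair for s and t in G if and only if (k, l−|E(s,t)|) is a connectivity pair for s and t in the graph G−E(s,t) obtained by deleting all edges joining s and t. -/
import Mathlib


/-- A multigraph on vertex type `V` with edges drawn from `E`: each edge `e` in the
edge set joins the two (distinct) vertices of `ends e`.  Parallel edges are allowed,
loops are not. -/
structure Multigraph (V : Type) (E : Type) where
  edgeSet : Set E
  ends : E → Sym2 V
  no_loops : ∀ e ∈ edgeSet, ¬ (ends e).IsDiag

namespace Multigraph

variable {V E : Type}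

/-- Walks in a multigraph. -/
inductive Walk (G : Multigraph V E) : V → V → Type
  | nil (v : V) : Walk G v v
  | cons {u v w : V} (e : E) (he : e ∈ G.edgeSet) (huv : G.ends e = s(u, v))
      (p : Walk G v w) : Walk G u w

namespace Walk

variable {G : Multigraph V E}

/-- The list of vertices visited by a walk. -/
def support : {u v : V} → G.Walk u v → List V
  | u, _, .nil _ => [u]
  | u, _, .cons _ _ _ p => u :: p.support

/-- The list of edges used by a walk. -/
def edges : {u v : V} → G.Walk u v → List E
  | _, _, .nil _ => []
  | _, _, .cons e _ _ p => e :: p.edges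

/-- A walk is a path if it visits no vertex twice. -/
def IsPath {u v : V} (p : G.Walk u v) : Prop := p.support.Nodup

end Walk

/-- Two walks are edge-disjoint if they share no edge. -/
def EdgeDisjoint {G : Multigraph V E} {u₁ v₁ u₂ v₂ : V}
    (p : G.Walk u₁ v₁) (q : G.Walk u₂ v₂) : Prop :=
  ∀ e, e ∈ p.edges → e ∉ q.edges

/-- Two `s`-`t` walks are internally disjoint if they share no vertices other
than `s` and `t`. -/
def InternallyDisjoint {G : Multigraph V E} {s t : V}
    (p q : G.Walk s t) : Prop :=
  ∀ v, v ∈ p.support → v ∈ q.support → v = s ∨ v = t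


/-- `(W, F)` is an `s`-`t` disconnecting pair: `W` is a set of vertices avoiding `s`
and `t`, `F` is a set of edges of `G`, and `G - W - F` contains no `s`-`t` path. -/
def DisconnectingPair (G : Multigraph V E) (s t : V) (W : Finset V) (F : Finset E) : Prop :=
  (↑W : Set V) ⊆ ({s, t} : Set V)ᶜ ∧ (↑F : Set E) ⊆ G.edgeSet ∧
    ∀ p : G.Walk s t, (∃ x ∈ p.support, x ∈ W) ∨ ∃ e ∈ p.edges, e ∈ F

/-- `(k, l)` is a connectivity pair for `s` and `t` in `G`: there is an `s`-`t`
disconnecting pair of order `k` and size `l`, but none of cardinality less than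
`k + l` having order at most `k` and size at most `l`. -/
def ConnectivityPair (G : Multigraph V E) (s t : V) (k l : ℕ) : Prop :=
  (∃ (W : Finset V) (F : Finset E), G.DisconnectingPair s t W F ∧ W.card = k ∧ F.card = l) ∧
    ¬ ∃ (W : Finset V) (F : Finset E), G.DisconnectingPair s t W F ∧
        W.card + F.card < k + l ∧ W.card ≤ k ∧ F.card ≤ l

/-- Delete a set of edges from a multigraph. -/
def deleteEdges (G : Multigraph V E) (F : Set E) : Multigraph V E :=
  ⟨G.edgeSet \ F, G.ends, fun e he => G.no_loops e he.1⟩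

end Multigraph

namespace Multigraph

variable {V E : Type} {G : Multigraph V E}

lemma Walk.edges_subset : ∀ {u v : V} (p : G.Walk u v), ∀ e ∈ p.edges, e ∈ G.edgeSet := by
  intro u v p
  induction p with
  | nil v => simp [Walk.edges]
  | cons e he huv p ih =>
    intro f hf
    simp only [Walk.edges, List.mem_cons] at hf
    rcases hf with rfl | hf
    · exact he
    · exact ih f hf

lemma exists_walk_of_delete {F : Set E} : ∀ {u v : V} (p : (G.deleteEdges F).Walk u v),
    ∃ q : G.Walk u v, q.support = p.support ∧ q.edges = p.edges := by
  intro u v p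
  induction p with
  | nil v => exact ⟨.nil v, rfl, rfl⟩
  | cons e he huv p ih =>
    obtain ⟨q, hs, hedge⟩ := ih
    exact ⟨.cons e he.1 huv q, by simp [Walk.support, hs], by simp [Walk.edges, hedge]⟩

lemma exists_walk_to_delete {F : Set E} : ∀ {u v : V} (p : G.Walk u v),
    (∀ e ∈ p.edges, e ∉ F) →
    ∃ q : (G.deleteEdges F).Walk u v, q.support = p.support ∧ q.edges = p.edges := by
  intro u v p
  induction p with
  | nil v => exact fun _ => ⟨.nil v, rfl, rfl⟩
  | cons e he huv p ih =>
    intro h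
    obtain ⟨q, hs, hedge⟩ := ih fun f hf => h f (by simp [Walk.edges, hf])
    refine ⟨.cons e ⟨he, h e (by simp [Walk.edges])⟩ huv q,
      by simp [Walk.support, hs], by simp [Walk.edges, hedge]⟩

end Multigraph

open Multigraph in
/-- `(k, l)` is a connectivity pair for `s` and `t` in `G` if and only if
`(k, l - |E(s, t)|)` is a connectivity pair for `s` and `t` in `G - E(s, t)`
(the subtraction being the genuine one on integers, i.e. `l ≥ |E(s, t)|`). -/
theorem connectivity_pair_delete_st_edges {V E : Type} [Fintype E] (G : Multigraph V E)
    (s t : V) (hst : s ≠ t) (k l : ℕ) :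
    G.ConnectivityPair s t k l ↔
      ∃ l' : ℕ, l = l' + {e ∈ G.edgeSet | G.ends e = s(s, t)}.ncard ∧
        (G.deleteEdges {e ∈ G.edgeSet | G.ends e = s(s, t)}).ConnectivityPair s t k l' := by
  classical
  set S : Set E := {e ∈ G.edgeSet | G.ends e = s(s, t)} with hSdef
  have hSfin : S.Finite := Set.toFinite S
  set Sf : Finset E := hSfin.toFinset with hSfdef
  have hmemSf : ∀ e, e ∈ Sf ↔ e ∈ S := fun e => hSfin.mem_toFinset
  have hm : S.ncard = Sf.card := Set.ncard_eq_toFinset_card S hSfin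
  set G' : Multigraph V E := G.deleteEdges S with hG'def
  -- every disconnecting pair of G contains all s-t edges
  have hSsub : ∀ (W : Finset V) (F : Finset E), G.DisconnectingPair s t W F → Sf ⊆ F := by
    rintro W F ⟨hW, hF, hwalks⟩ e heSf
    have heS : e ∈ S := (hmemSf e).1 heSf
    rcases hwalks (.cons e heS.1 heS.2 (.nil t)) with ⟨x, hx, hxW⟩ | ⟨f, hf, hfF⟩
    · have hxst : x = s ∨ x = t := by
        simpa [Walk.support] using hx
      exact absurd (by rcases hxst with rfl | rfl <;> simp) (hW hxW)
    · have : f = e := by simpa [Walk.edges] using hf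
      rwa [this] at hfF
  -- forward transfer of disconnecting pairs
  have hforward : ∀ (W : Finset V) (F : Finset E), G.DisconnectingPair s t W F →
      G'.DisconnectingPair s t W (F \ Sf) := by
    rintro W F ⟨hW, hF, hwalks⟩
    refine ⟨hW, ?_, ?_⟩
    · intro e he
      simp only [Finset.coe_sdiff, Set.mem_diff, Finset.mem_coe] at he
      exact ⟨hF he.1, fun hS => he.2 ((hmemSf e).2 hS)⟩
    · intro p'
      obtain ⟨q, hsup, hedge⟩ := exists_walk_of_delete p'
      rcases hwalks q with ⟨x, hx, hxW⟩ | ⟨e, he, heF⟩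
      · exact Or.inl ⟨x, hsup ▸ hx, hxW⟩
      · refine Or.inr ⟨e, hedge ▸ he, Finset.mem_sdiff.2 ⟨heF, fun heSf => ?_⟩⟩
        have : e ∈ G'.edgeSet := Walk.edges_subset p' e (hedge ▸ he)
        exact this.2 ((hmemSf e).1 heSf)
  -- backward transfer of disconnecting pairs
  have hback : ∀ (W : Finset V) (F' : Finset E), G'.DisconnectingPair s t W F' →
      G.DisconnectingPair s t W (F' ∪ Sf) := by
    rintro W F' ⟨hW, hF', hwalks⟩
    refine ⟨hW, ?_, ?_⟩
    · intro e he
      simp only [Finset.coe_union, Set.mem_union, Finset.mem_coe] at he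
      rcases he with he | he
      · exact (hF' he).1
      · exact ((hmemSf e).1 he).1
    · intro p
      by_cases h : ∃ e ∈ p.edges, e ∈ S
      · obtain ⟨e, he, heS⟩ := h
        exact Or.inr ⟨e, he, Finset.mem_union_right _ ((hmemSf e).2 heS)⟩
      · push_neg at h
        obtain ⟨q, hsup, hedge⟩ := exists_walk_to_delete p h
        rcases hwalks q with ⟨x, hx, hxW⟩ | ⟨e, he, heF'⟩
        · exact Or.inl ⟨x, hsup ▸ hx, hxW⟩
        · exact Or.inr ⟨e, hedge ▸ he, Finset.mem_union_left _ heF'⟩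
  -- disjointness of F' and Sf for pairs of G'
  have hdisj : ∀ (W : Finset V) (F' : Finset E), G'.DisconnectingPair s t W F' →
      Disjoint F' Sf := by
    rintro W F' ⟨_, hF', _⟩
    refine Finset.disjoint_left.2 fun e heF' heSf => ?_
    exact (hF' heF').2 ((hmemSf e).1 heSf)
  rw [hm]
  constructor
  · rintro ⟨⟨W, F, hdp, hWc, hFc⟩, hmin⟩
    have hSfF := hSsub W F hdp
    have hml : Sf.card ≤ l := hFc ▸ Finset.card_le_card hSfF
    refine ⟨l - Sf.card, by omega, ⟨W, F \ Sf, hforward W F hdp, hWc, ?_⟩, ?_⟩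
    · rw [Finset.card_sdiff_of_subset hSfF, hFc]
    · rintro ⟨W₀, F₀, hdp₀, hlt, hWle, hFle⟩
      refine hmin ⟨W₀, F₀ ∪ Sf, hback W₀ F₀ hdp₀, ?_, hWle, ?_⟩
      · rw [Finset.card_union_of_disjoint (hdisj W₀ F₀ hdp₀)]
        omega
      · rw [Finset.card_union_of_disjoint (hdisj W₀ F₀ hdp₀)]
        omega
  · rintro ⟨l', hl, ⟨W, F', hdp', hWc, hF'c⟩, hmin'⟩
    constructor
    · refine ⟨W, F' ∪ Sf, hback W F' hdp', hWc, ?_⟩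
      rw [Finset.card_union_of_disjoint (hdisj W F' hdp')]
      omega
    · rintro ⟨W₀, F₀, hdp₀, hlt, hWle, hFle⟩
      have hSfF₀ := hSsub W₀ F₀ hdp₀
      have hcard₀ : (F₀ \ Sf).card = F₀.card - Sf.card := Finset.card_sdiff_of_subset hSfF₀
      have hml₀ : Sf.card ≤ F₀.card := Finset.card_le_card hSfF₀
      refine hmin' ⟨W₀, F₀ \ Sf, hforward W₀ F₀ hdp₀, ?_, hWle, ?_⟩ <;> omega
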